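/- If D is a strong s-quadrangular digraph in which every vertex has out-degree at most 3 and in-degree at most 3, then D is hamiltonian. -/

import Mathlib

/-- Out-neighborhood of `x` in the digraph with arc relation `A`. -/
def outN {V : Type*} (A : V → V → Prop) (x : V) : Set V := {y | A x y}

/-- In-neighborhood of `x` in the digraph with arc relation `A`. -/
def inN {V : Type*} (A : V → V → Prop) (x : V) : Set V := {y | A y x}

/-- `S` is a q-set for the neighborhood function `N`: it has at least two
vertices and every member shares an `N`-neighbor with another member. -/
def IsQSet {V : Type*} (N : V → Set V) (S : Set V) : Prop :=
  2 ≤ S.ncard ∧ ∀ u ∈ S, ∃ v ∈ S, v ≠ u ∧ (N u ∩ N v).Nonempty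

/-- The union of all pairwise common `N`-neighborhoods of distinct members of `S`. -/
def commonUnion {V : Type*} (N : V → Set V) (S : Set V) : Set V :=
  {w | ∃ u ∈ S, ∃ v ∈ S, u ≠ v ∧ w ∈ N u ∧ w ∈ N v}

/-- A digraph is s-quadrangular if every q⁺-set and every q⁻-set `S` has
pairwise common neighborhood union of size at least `|S|`. -/
def SQuadD {V : Type*} (A : V → V → Prop) : Prop :=
  (∀ S : Set V, IsQSet (outN A) S → S.ncard ≤ (commonUnion (outN A) S).ncard) ∧
  (∀ S : Set V, IsQSet (inN A) S → S.ncard ≤ (commonUnion (inN A) S).ncard)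

/-- A digraph is strong if there is a directed path between every ordered pair. -/
def StrongD {V : Type*} (A : V → V → Prop) : Prop :=
  ∀ x y : V, Relation.ReflTransGen A x y

/-- A cycle factor of a loopless digraph, encoded as a fixed-point-free
permutation following the arcs: its cycles are the vertex-disjoint directed
cycles covering all vertices. -/
def IsCycleFactor {V : Type*} (A : V → V → Prop) (σ : Equiv.Perm V) : Prop :=
  ∀ v, A v (σ v) ∧ σ v ≠ v


set_option linter.unusedSectionVars false
set_option linter.unusedVariables false
set_option maxHeartbeats 1000000

open Equiv Equiv.Perm

section Aux

variable {V : Type*} [Fintype V] [DecidableEq V]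

/-- setoid of the same-cycle relation -/
def scSetoid (σ : Equiv.Perm V) : Setoid V :=
  ⟨σ.SameCycle, ⟨fun x => Equiv.Perm.SameCycle.refl σ x, Equiv.Perm.SameCycle.symm,
    Equiv.Perm.SameCycle.trans⟩⟩

/-- number of cycles of a permutation -/
noncomputable def nCyc (σ : Equiv.Perm V) : ℕ := Nat.card (Quotient (scSetoid σ))

lemma sameCycle_pow_nat (σ : Equiv.Perm V) (x : V) (m : ℕ) :
    σ.SameCycle x ((σ ^ m) x) := ⟨(m : ℤ), by rw [zpow_natCast]⟩

lemma pow_succ_apply (σ : Equiv.Perm V) (x : V) (m : ℕ) :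
    (σ ^ (m + 1)) x = σ ((σ ^ m) x) := by
  rw [pow_succ']; rfl

/-- first hit of a set B along the σ-orbit, with σ' agreeing off B -/
lemma firstHit (σ σ' : Equiv.Perm V) (B : Set V)
    (hagree : ∀ x, x ∉ B → σ' x = σ x) (p : V)
    (h : ∃ m : ℕ, (σ ^ m) p ∈ B) :
    ∃ m : ℕ, (σ' ^ m) p = (σ ^ m) p ∧ (σ ^ m) p ∈ B ∧ ∀ j, j < m → (σ ^ j) p ∉ B := by
  classical
  refine ⟨Nat.find h, ?_, Nat.find_spec h, fun j hj => Nat.find_min h hj⟩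
  have key : ∀ k, k ≤ Nat.find h → (σ' ^ k) p = (σ ^ k) p := by
    intro k hk
    induction k with
    | zero => simp
    | succ k ih =>
      have hk' : k ≤ Nat.find h := le_of_lt (Nat.lt_of_succ_le hk)
      have hnot : (σ ^ k) p ∉ B := Nat.find_min h (Nat.lt_of_succ_le hk)
      rw [pow_succ_apply, pow_succ_apply, ih hk', hagree _ hnot]
  exact key _ le_rfl

lemma pow_mod_eq (σ : Equiv.Perm V) (e : V) (T : ℕ) (hT : (σ ^ T) e = e) (i : ℕ) :
    (σ ^ i) e = (σ ^ (i % T)) e := by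
  rcases Nat.eq_zero_or_pos T with h0 | hpos
  · simp [h0]
  · induction i using Nat.strong_induction_on with
    | _ i ih =>
      by_cases hi : i < T
      · rw [Nat.mod_eq_of_lt hi]
      · push_neg at hi
        have h1 : i = (i - T) + T := by omega
        have h2 : (σ ^ i) e = (σ ^ (i - T)) e := by
          conv_lhs => rw [h1]
          rw [pow_add, Equiv.Perm.mul_apply, hT]
        rw [h2, ih (i - T) (by omega)]
        congr 1
        conv_rhs => rw [h1]
        rw [Nat.add_mod_right]

/-- jump lemma: if the only markers in e's cycle are e and t, then following σ'
from σ e we first reach t -/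
lemma jump (σ σ' : Equiv.Perm V) (B : Set V)
    (hagree : ∀ x, x ∉ B → σ' x = σ x)
    (e t : V) (htB : t ∈ B) (hne : t ≠ e)
    (hsc : σ.SameCycle e t)
    (honly : ∀ a, a ∈ B → σ.SameCycle a e → a = e ∨ a = t) :
    ∃ m : ℕ, (σ' ^ m) (σ e) = t := by
  classical
  have hreach : ∃ m : ℕ, (σ ^ m) (σ e) ∈ B := by
    have h1 : σ.SameCycle (σ e) t := ((Equiv.Perm.sameCycle_apply_right).mpr (SameCycle.refl σ e)).symm.trans hsc
    obtain ⟨i, _, _, hie⟩ := h1.exists_pow_eq σ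
    exact ⟨i, by rw [hie]; exact htB⟩
  obtain ⟨m, hm1, hm2, hm3⟩ := firstHit σ σ' B hagree (σ e) hreach
  have hq : σ.SameCycle ((σ ^ m) (σ e)) e := by
    have : σ.SameCycle (σ e) ((σ ^ m) (σ e)) := sameCycle_pow_nat σ _ m
    exact this.symm.trans ((Equiv.Perm.sameCycle_apply_right).mpr (SameCycle.refl σ e)).symm
  rcases honly _ hm2 hq with hqe | hqt
  · -- contradiction: t appears strictly before
    exfalso
    have hT : (σ ^ (m + 1)) e = e := by rw [pow_add, pow_one, Equiv.Perm.mul_apply]; exact hqe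
    obtain ⟨i, _, _, hit⟩ := hsc.exists_pow_eq σ
    have hr : (σ ^ (i % (m + 1))) e = t := by rw [← pow_mod_eq σ e (m+1) hT i, hit]
    set r := i % (m + 1) with hrdef
    have hrlt : r < m + 1 := Nat.mod_lt _ (Nat.succ_pos m)
    have hrne : r ≠ 0 := by
      intro h0
      rw [h0] at hr
      simp at hr
      exact hne hr.symm
    have : (σ ^ (r - 1)) (σ e) = t := by
      have : (σ ^ ((r - 1) + 1)) e = t := by
        rwa [Nat.sub_add_cancel (Nat.one_le_iff_ne_zero.mpr hrne)]
      rw [← this, pow_add, pow_one, Equiv.Perm.mul_apply]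
    exact hm3 (r - 1) (by omega) (by rw [this]; exact htB)
  · exact ⟨m, by rw [hm1]; exact hqt⟩

/-- the main counting lemma: if B lies in two distinct σ-cycles whose union M
becomes a single σ'-cycle, and σ' = σ off B, then σ' has fewer cycles. -/
lemma count_lt (σ σ' : Equiv.Perm V) (B : Set V)
    (hagree : ∀ x, x ∉ B → σ' x = σ x)
    (x₀ y₀ : V) (hxy : ¬ σ.SameCycle x₀ y₀)
    (hcls : ∀ a, a ∈ B → σ.SameCycle a x₀ ∨ σ.SameCycle a y₀)
    (himg : ∀ a, a ∈ B → σ.SameCycle (σ' a) x₀ ∨ σ.SameCycle (σ' a) y₀)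
    (hone : ∀ v u, (σ.SameCycle v x₀ ∨ σ.SameCycle v y₀) →
      (σ.SameCycle u x₀ ∨ σ.SameCycle u y₀) → σ'.SameCycle v u) :
    nCyc σ' < nCyc σ := by
  classical
  set M : Set V := {v | σ.SameCycle v x₀ ∨ σ.SameCycle v y₀} with hM
  have hMB : B ⊆ M := fun a ha => hcls a ha
  have hMsc : ∀ v u, σ.SameCycle v u → u ∈ M → v ∈ M := by
    rintro v u hvu (h | h)
    · exact Or.inl (hvu.trans h)
    · exact Or.inr (hvu.trans h)
  -- D1
  have D1 : ∀ v u, σ'.SameCycle v u → σ.SameCycle v u ∨ (v ∈ M ∧ u ∈ M) := by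
    have step : ∀ v, σ.SameCycle v (σ' v) ∨ (v ∈ M ∧ σ' v ∈ M) := by
      intro v
      by_cases hv : v ∈ B
      · exact Or.inr ⟨hMB hv, himg v hv⟩
      · exact Or.inl (by rw [hagree v hv]; exact ⟨1, by simp⟩)
    have main : ∀ (n : ℕ) (v : V), σ.SameCycle v ((σ' ^ n) v) ∨ (v ∈ M ∧ (σ' ^ n) v ∈ M) := by
      intro n v
      induction n with
      | zero => exact Or.inl (by simp [SameCycle.refl])
      | succ n ih =>
        rw [pow_succ_apply]
        rcases ih with h | ⟨h1, h2⟩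
        · rcases step ((σ' ^ n) v) with h' | ⟨h1', h2'⟩
          · exact Or.inl (h.trans h')
          · exact Or.inr ⟨hMsc v _ h h1', h2'⟩
        · rcases step ((σ' ^ n) v) with h' | ⟨h1', h2'⟩
          · exact Or.inr ⟨h1, hMsc _ _ h'.symm h2⟩
          · exact Or.inr ⟨h1, h2'⟩
    intro v u hvu
    obtain ⟨n, _, _, hn⟩ := hvu.exists_pow_eq σ'
    rcases main n v with h | h
    · exact Or.inl (by rwa [hn] at h)
    · exact Or.inr ⟨h.1, by rw [← hn]; exact h.2⟩
  -- D3 : outside M the orbits agree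
  have D3 : ∀ v u, v ∉ M → σ.SameCycle v u → σ'.SameCycle v u := by
    intro v u hv hvu
    obtain ⟨n, _, _, hn⟩ := hvu.exists_pow_eq σ
    have key : ∀ k, (σ' ^ k) v = (σ ^ k) v := by
      intro k
      induction k with
      | zero => simp
      | succ k ih =>
        have hk : (σ ^ k) v ∉ B := by
          intro hB
          exact hv (hMsc v _ (sameCycle_pow_nat σ v k) (hMB hB))
        rw [pow_succ_apply, pow_succ_apply, ih, hagree _ hk]
    exact ⟨(n : ℤ), by rw [zpow_natCast, key n, hn]⟩
  -- the map between quotients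
  let f : V → Quotient (scSetoid σ) := fun v =>
    if σ.SameCycle v y₀ then (Quotient.mk (scSetoid σ) x₀) else Quotient.mk (scSetoid σ) v
  have hfM : ∀ v, v ∈ M → f v = Quotient.mk (scSetoid σ) x₀ := by
    intro v hv
    by_cases h : σ.SameCycle v y₀
    · simp only [f, if_pos h]
    · rcases hv with h' | h'
      · simp only [f, if_neg h]; exact Quotient.sound h'
      · exact absurd h' h
  have hwd : ∀ v u, σ'.SameCycle v u → f v = f u := by
    intro v u hvu
    rcases D1 v u hvu with h | ⟨h1, h2⟩
    · by_cases hy : σ.SameCycle v y₀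
      · have hy' : σ.SameCycle u y₀ := h.symm.trans hy
        simp only [f, if_pos hy, if_pos hy']
      · have hy' : ¬ σ.SameCycle u y₀ := fun hc => hy (h.trans hc)
        simp only [f, if_neg hy, if_neg hy']
        exact Quotient.sound h
    · rw [hfM v h1, hfM u h2]
  let g : Quotient (scSetoid σ') → Quotient (scSetoid σ) :=
    Quotient.lift f (fun v u h => hwd v u h)
  have hMiff : ∀ v, f v = Quotient.mk (scSetoid σ) x₀ → v ∈ M := by
    intro v hfv
    by_cases h : σ.SameCycle v y₀
    · exact Or.inr h
    · simp only [f, if_neg h] at hfv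
      exact Or.inl (Quotient.exact hfv)
  have hginj : Function.Injective g := by
    intro q1 q2
    refine Quotient.inductionOn₂ q1 q2 ?_
    intro v u hfvu
    simp only [g, Quotient.lift_mk] at hfvu
    apply Quotient.sound
    show σ'.SameCycle v u
    by_cases hv : σ.SameCycle v y₀
    · -- f v = ⟦x₀⟧, so f u = ⟦x₀⟧ too, so u ∈ M; and v ∈ M
      have hfv : f v = Quotient.mk (scSetoid σ) x₀ := by simp only [f, if_pos hv]
      have hu : u ∈ M := hMiff u (by rw [← hfvu]; exact hfv)
      exact hone v u (Or.inr hv) hu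
    · by_cases hu : σ.SameCycle u y₀
      · have hfu : f u = Quotient.mk (scSetoid σ) x₀ := by simp only [f, if_pos hu]
        have hv' : v ∈ M := hMiff v (by rw [hfvu]; exact hfu)
        exact hone v u hv' (Or.inr hu)
      · simp only [f, if_neg hv, if_neg hu] at hfvu
        have hscvu : σ.SameCycle v u := Quotient.exact hfvu
        by_cases hvM : v ∈ M
        · exact hone v u hvM (hMsc u v hscvu.symm hvM)
        · exact D3 v u hvM hscvu
  have hnot : (Quotient.mk (scSetoid σ) y₀) ∉ Set.range g := by
    rintro ⟨q, hq⟩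
    induction q using Quotient.inductionOn with
    | _ v =>
      simp only [g, Quotient.lift_mk] at hq
      by_cases h : σ.SameCycle v y₀
      · simp only [f, if_pos h] at hq
        exact hxy (Quotient.exact hq)
      · simp only [f, if_neg h] at hq
        exact h (Quotient.exact hq)
  letI : Fintype (Quotient (scSetoid σ')) := Fintype.ofFinite _
  letI : Fintype (Quotient (scSetoid σ)) := Fintype.ofFinite _
  show Nat.card _ < Nat.card _
  rw [Nat.card_eq_fintype_card, Nat.card_eq_fintype_card]
  exact Fintype.card_lt_of_injective_of_notMem g hginj hnot

-- helper: escape to B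
lemma escape (σ σ' : Equiv.Perm V) (B : Set V)
    (hagree : ∀ x, x ∉ B → σ' x = σ x) (v : V)
    (h : ∃ b ∈ B, σ.SameCycle v b) :
    ∃ b ∈ B, σ'.SameCycle v b := by
  obtain ⟨b, hbB, hvb⟩ := h
  have hreach : ∃ m : ℕ, (σ ^ m) v ∈ B := by
    obtain ⟨i, _, _, hi⟩ := hvb.exists_pow_eq σ
    exact ⟨i, by rw [hi]; exact hbB⟩
  obtain ⟨m, hm1, hm2, _⟩ := firstHit σ σ' B hagree v hreach
  exact ⟨(σ ^ m) v, hm2, by rw [← hm1]; exact sameCycle_pow_nat σ' v m⟩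

lemma merge2 (σ : Equiv.Perm V) (a b : V) (h : ¬ σ.SameCycle a b) :
    nCyc (σ * Equiv.swap a b) < nCyc σ := by
  classical
  have hab : a ≠ b := fun he => h (he ▸ SameCycle.refl σ a)
  set σ' := σ * Equiv.swap a b with hσ'
  have hagree : ∀ x, x ∉ ({a, b} : Set V) → σ' x = σ x := by
    intro x hx
    simp only [Set.mem_insert_iff, Set.mem_singleton_iff, not_or] at hx
    simp [hσ', Equiv.Perm.mul_apply, Equiv.swap_apply_of_ne_of_ne hx.1 hx.2]
  have hσ'a : σ' a = σ b := by simp [hσ', Equiv.Perm.mul_apply]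
  have hσ'b : σ' b = σ a := by simp [hσ', Equiv.Perm.mul_apply]
  apply count_lt σ σ' ({a, b} : Set V) hagree a b h
  · rintro c (rfl | rfl)
    · exact Or.inl (SameCycle.refl σ _)
    · exact Or.inr (SameCycle.refl σ _)
  · rintro c (rfl | rfl)
    · rw [hσ'a]; exact Or.inr ⟨-1, by simp⟩
    · rw [hσ'b]; exact Or.inl ⟨-1, by simp⟩
  · -- single new cycle
    have hBa : a ∈ ({a, b} : Set V) := Or.inl rfl
    have hBb : b ∈ ({a, b} : Set V) := Or.inr rfl
    have hab' : σ'.SameCycle a b := by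
      have hreach : ∃ m : ℕ, (σ ^ m) (σ b) ∈ ({a, b} : Set V) := by
        have h1 : σ.SameCycle (σ b) b := ⟨-1, by simp⟩
        obtain ⟨i, _, _, hi⟩ := h1.exists_pow_eq σ
        exact ⟨i, by rw [hi]; exact hBb⟩
      obtain ⟨m, hm1, hm2, _⟩ := firstHit σ σ' ({a,b} : Set V) hagree (σ b) hreach
      have hq : (σ ^ m) (σ b) = b := by
        rcases hm2 with hq | hq
        · exfalso
          have hb1 : σ.SameCycle b (σ b) := ⟨1, by simp⟩
          have : σ.SameCycle b ((σ ^ m) (σ b)) :=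
            hb1.trans (sameCycle_pow_nat σ (σ b) m)
          rw [hq] at this
          exact h this.symm
        · exact hq
      have : (σ' ^ (m + 1)) a = b := by
        rw [pow_add, pow_one, Equiv.Perm.mul_apply, hσ'a, hm1, hq]
      exact ⟨((m + 1 : ℕ) : ℤ), by rw [zpow_natCast]; exact this⟩
    intro v u hv hu
    have key : ∀ x, (σ.SameCycle x a ∨ σ.SameCycle x b) → σ'.SameCycle x a := by
      intro x hx
      obtain ⟨c, hcB, hc⟩ := escape σ σ' ({a,b} : Set V) hagree x
        (by rcases hx with h' | h'
            · exact ⟨a, hBa, h'⟩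
            · exact ⟨b, hBb, h'⟩)
      rcases hcB with rfl | rfl
      · exact hc
      · exact hc.trans hab'.symm
    exact (key v hv).trans (key u hu).symm

lemma sc_apply_self (σ : Equiv.Perm V) (x : V) : σ.SameCycle (σ x) x := ⟨-1, by simp⟩

lemma merge4 (σ : Equiv.Perm V) (a₀ a₁ a₂ a₃ : V) (τ : Equiv.Perm V)
    (hτ₀ : τ a₀ = a₁) (hτ₁ : τ a₁ = a₂) (hτ₂ : τ a₂ = a₃) (hτ₃ : τ a₃ = a₀)
    (hτ : ∀ x, x ∉ ({a₀, a₁, a₂, a₃} : Set V) → τ x = x)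
    (h02 : σ.SameCycle a₀ a₂) (h13 : σ.SameCycle a₁ a₃)
    (h01 : ¬ σ.SameCycle a₀ a₁) (h02' : a₀ ≠ a₂) (h13' : a₁ ≠ a₃) :
    nCyc (σ * τ) < nCyc σ := by
  classical
  set σ' := σ * τ with hσ'
  set B : Set V := {a₀, a₁, a₂, a₃} with hBdef
  have hB0 : a₀ ∈ B := by simp [hBdef]
  have hB1 : a₁ ∈ B := by simp [hBdef]
  have hB2 : a₂ ∈ B := by simp [hBdef]
  have hB3 : a₃ ∈ B := by simp [hBdef]
  have hagree : ∀ x, x ∉ B → σ' x = σ x := by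
    intro x hx
    rw [hσ', Equiv.Perm.mul_apply, hτ x hx]
  have happ0 : σ' a₀ = σ a₁ := by rw [hσ', Equiv.Perm.mul_apply, hτ₀]
  have happ1 : σ' a₁ = σ a₂ := by rw [hσ', Equiv.Perm.mul_apply, hτ₁]
  have happ2 : σ' a₂ = σ a₃ := by rw [hσ', Equiv.Perm.mul_apply, hτ₂]
  have happ3 : σ' a₃ = σ a₀ := by rw [hσ', Equiv.Perm.mul_apply, hτ₃]
  have h03 : ¬ σ.SameCycle a₀ a₃ := fun hc => h01 (hc.trans h13.symm)
  have h21 : ¬ σ.SameCycle a₂ a₁ := fun hc => h01 (h02.trans hc)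
  have h23 : ¬ σ.SameCycle a₂ a₃ := fun hc => h01 (h02.trans (hc.trans h13.symm))
  apply count_lt σ σ' B hagree a₀ a₁ h01
  · rintro c (rfl | rfl | rfl | rfl)
    · exact Or.inl (SameCycle.refl σ _)
    · exact Or.inr (SameCycle.refl σ _)
    · exact Or.inl h02.symm
    · exact Or.inr h13.symm
  · rintro c (rfl | rfl | rfl | rfl)
    · rw [happ0]; exact Or.inr (sc_apply_self σ a₁)
    · rw [happ1]; exact Or.inl ((sc_apply_self σ a₂).trans h02.symm)
    · rw [happ2]; exact Or.inr ((sc_apply_self σ a₃).trans h13.symm)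
    · rw [happ3]; exact Or.inl (sc_apply_self σ a₀)
  · -- single new cycle
    have mkjump : ∀ s e t : V, σ' s = σ e → t ∈ B → t ≠ e → σ.SameCycle e t →
        (∀ a, a ∈ B → σ.SameCycle a e → a = e ∨ a = t) → σ'.SameCycle s t := by
      intro s e t hs htB hne hsc honly
      obtain ⟨m, hm⟩ := jump σ σ' B hagree e t htB hne hsc honly
      have : (σ' ^ (m + 1)) s = t := by
        rw [pow_add, pow_one, Equiv.Perm.mul_apply, hs, hm]
      exact ⟨((m + 1 : ℕ) : ℤ), by rw [zpow_natCast]; exact this⟩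
    have j0 : σ'.SameCycle a₀ a₃ := by
      apply mkjump a₀ a₁ a₃ happ0 hB3 h13'.symm h13
      rintro c (rfl | rfl | rfl | rfl) hsc
      · exact absurd hsc h01
      · exact Or.inl rfl
      · exact absurd hsc h21
      · exact Or.inr rfl
    have j1 : σ'.SameCycle a₁ a₀ := by
      apply mkjump a₁ a₂ a₀ happ1 hB0 h02' h02.symm
      rintro c (rfl | rfl | rfl | rfl) hsc
      · exact Or.inr rfl
      · exact absurd hsc.symm h21
      · exact Or.inl rfl
      · exact absurd hsc.symm h23
    have j2 : σ'.SameCycle a₂ a₁ := by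
      apply mkjump a₂ a₃ a₁ happ2 hB1 h13' h13.symm
      rintro c (rfl | rfl | rfl | rfl) hsc
      · exact absurd hsc h03
      · exact Or.inr rfl
      · exact absurd hsc h23
      · exact Or.inl rfl
    have toB : ∀ c, c ∈ B → σ'.SameCycle c a₀ := by
      rintro c (rfl | rfl | rfl | rfl)
      · exact SameCycle.refl σ' _
      · exact j1
      · exact j2.trans j1
      · exact j0.symm
    intro v u hv hu
    have key : ∀ x, (σ.SameCycle x a₀ ∨ σ.SameCycle x a₁) → σ'.SameCycle x a₀ := by
      intro x hx
      obtain ⟨c, hcB, hc⟩ := escape σ σ' B hagree x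
        (by rcases hx with h' | h'
            · exact ⟨a₀, hB0, h'⟩
            · exact ⟨a₁, hB1, h'⟩)
      exact hc.trans (toB c hcB)
    exact (key v hv).trans (key u hu).symm

lemma sameCycle_one_apply (σ : Equiv.Perm V) (x : V) : σ.SameCycle x (σ x) := ⟨1, by simp⟩

lemma commonUnion_pair (N : V → Set V) (a b : V) (hab : a ≠ b) :
    commonUnion N {a, b} = N a ∩ N b := by
  ext w
  constructor
  · rintro ⟨u, hu, v, hv, huv, hwu, hwv⟩
    simp only [Set.mem_insert_iff, Set.mem_singleton_iff] at hu hv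
    rcases hu with rfl | rfl <;> rcases hv with rfl | rfl
    · exact absurd rfl huv
    · exact ⟨hwu, hwv⟩
    · exact ⟨hwv, hwu⟩
    · exact absurd rfl huv
  · rintro ⟨h1, h2⟩
    exact ⟨a, Or.inl rfl, b, Or.inr rfl, hab, h1, h2⟩

lemma exists_snd_common {N : V → Set V}
    (hq : ∀ S, IsQSet N S → S.ncard ≤ (commonUnion N S).ncard)
    {a b c : V} (hab : a ≠ b) (hca : c ∈ N a) (hcb : c ∈ N b) :
    ∃ d, d ∈ N a ∧ d ∈ N b ∧ d ≠ c := by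
  have hqs : IsQSet N {a, b} := by
    constructor
    · rw [Set.ncard_pair hab]
    · intro u hu
      simp only [Set.mem_insert_iff, Set.mem_singleton_iff] at hu
      rcases hu with rfl | rfl
      · exact ⟨b, Or.inr rfl, hab.symm, ⟨c, hca, hcb⟩⟩
      · exact ⟨a, Or.inl rfl, hab, ⟨c, hcb, hca⟩⟩
  have h2 := hq _ hqs
  rw [commonUnion_pair N a b hab, Set.ncard_pair hab] at h2
  obtain ⟨p, hp, q, hq', hpq⟩ := (Set.one_lt_ncard (Set.toFinite _)).mp h2
  by_cases hpc : p = c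
  · exact ⟨q, hq'.1, hq'.2, fun h => hpq (by rw [hpc, h])⟩
  · exact ⟨p, hp.1, hp.2, hpc⟩

lemma keyOut (A : V → V → Prop) (σ : Equiv.Perm V)
    (hfac : IsCycleFactor A σ)
    (hq : ∀ S, IsQSet (outN A) S → S.ncard ≤ (commonUnion (outN A) S).ncard)
    (hdeg : ∀ v, (outN A v).ncard ≤ 3)
    (hnp : ∀ a b, ¬ σ.SameCycle a b → ¬ (A a (σ b) ∧ A b (σ a)))
    {x y : V} (hxy : A x y) (hcross : ¬ σ.SameCycle x y) :
    ∃ w, A x w ∧ A (σ⁻¹ y) w ∧ w ≠ σ x ∧ w ≠ y ∧ outN A x = {σ x, y, w} := by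
  have huy : σ.SameCycle (σ⁻¹ y) y := ⟨1, by simp⟩
  have hxu : ¬ σ.SameCycle x (σ⁻¹ y) := fun h => hcross (h.trans huy)
  have hxune : x ≠ σ⁻¹ y := fun h => hxu (h ▸ SameCycle.refl σ x)
  have hyu : A (σ⁻¹ y) y := by
    have := (hfac (σ⁻¹ y)).1
    rwa [Equiv.Perm.coe_inv, Equiv.apply_symm_apply] at this
  obtain ⟨w, hw1, hw2, hw3⟩ := exists_snd_common hq hxune
    (show y ∈ outN A x from hxy) (show y ∈ outN A (σ⁻¹ y) from hyu)
  have hwσx : w ≠ σ x := by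
    intro he
    apply hnp x (σ⁻¹ y) hxu
    constructor
    · rw [Equiv.Perm.coe_inv, Equiv.apply_symm_apply]; exact hxy
    · rw [← he]; exact hw2
  have hσxy : σ x ≠ y := fun h => hcross (h ▸ ⟨1, by simp⟩)
  have hsub : ({σ x, y, w} : Set V) ⊆ outN A x := by
    rintro v hv
    simp only [Set.mem_insert_iff, Set.mem_singleton_iff] at hv
    rcases hv with rfl | rfl | rfl
    · exact (hfac x).1
    · exact hxy
    · exact hw1
  have hcard : ({σ x, y, w} : Set V).ncard = 3 := by
    rw [Set.ncard_insert_of_notMem (by simp only [Set.mem_insert_iff,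
        Set.mem_singleton_iff, not_or]; exact ⟨hσxy, Ne.symm hwσx⟩) (Set.toFinite _),
      Set.ncard_insert_of_notMem (by simpa using Ne.symm hw3) (Set.toFinite _),
      Set.ncard_singleton]
  have heq := Set.eq_of_subset_of_ncard_le hsub
    (le_trans (hdeg x) (le_of_eq hcard.symm)) (Set.toFinite _)
  exact ⟨w, hw1, hw2, hwσx, hw3, heq.symm⟩

lemma keyIn (A : V → V → Prop) (σ : Equiv.Perm V)
    (hfac : IsCycleFactor A σ)
    (hq : ∀ S, IsQSet (inN A) S → S.ncard ≤ (commonUnion (inN A) S).ncard)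
    (hdeg : ∀ v, (inN A v).ncard ≤ 3)
    (hnp : ∀ a b, ¬ σ.SameCycle a b → ¬ (A a (σ b) ∧ A b (σ a)))
    {x y : V} (hxy : A x y) (hcross : ¬ σ.SameCycle x y) :
    ∃ z, A z y ∧ A z (σ x) ∧ z ≠ σ⁻¹ y ∧ z ≠ x ∧ inN A y = {σ⁻¹ y, x, z} := by
  have hfac' : IsCycleFactor (fun p q => A q p) σ⁻¹ := by
    intro v
    constructor
    · show A (σ⁻¹ v) v
      have := (hfac (σ⁻¹ v)).1
      rwa [Equiv.Perm.coe_inv, Equiv.apply_symm_apply] at this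
    · intro h
      have h2 := congrArg σ h
      rw [Equiv.Perm.coe_inv, Equiv.apply_symm_apply] at h2
      exact (hfac v).2 h2.symm
  have hnp' : ∀ a b, ¬ (σ⁻¹).SameCycle a b →
      ¬ ((fun p q => A q p) a (σ⁻¹ b) ∧ (fun p q => A q p) b (σ⁻¹ a)) := by
    intro a b hsc hand
    have hinva : σ.SameCycle a (σ⁻¹ a) := ⟨-1, by simp⟩
    have hinvb : σ.SameCycle (σ⁻¹ b) b := ⟨1, by simp⟩
    have hsc2 : ¬ σ.SameCycle (σ⁻¹ a) (σ⁻¹ b) := by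
      intro hc
      exact hsc ((Equiv.Perm.sameCycle_inv).mpr (hinva.trans (hc.trans hinvb)))
    apply hnp (σ⁻¹ a) (σ⁻¹ b) hsc2
    constructor
    · rw [Equiv.Perm.coe_inv, Equiv.apply_symm_apply]; exact hand.2
    · rw [Equiv.Perm.coe_inv, Equiv.apply_symm_apply]; exact hand.1
  have hcross' : ¬ (σ⁻¹).SameCycle y x := by
    intro h
    exact hcross (((Equiv.Perm.sameCycle_inv).mp h).symm)
  obtain ⟨z, hz1, hz2, hz3, hz4, hz5⟩ :=
    keyOut (fun p q => A q p) σ⁻¹ hfac' hq hdeg hnp' (show (fun p q => A q p) y x from hxy) hcross'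
  rw [inv_inv] at hz2
  exact ⟨z, hz1, hz2, hz3, hz4, hz5⟩

lemma zSC (A : V → V → Prop) (σ : Equiv.Perm V)
    (hfac : IsCycleFactor A σ)
    (hqOut : ∀ S, IsQSet (outN A) S → S.ncard ≤ (commonUnion (outN A) S).ncard)
    (hqIn : ∀ S, IsQSet (inN A) S → S.ncard ≤ (commonUnion (inN A) S).ncard)
    (hdegOut : ∀ v, (outN A v).ncard ≤ 3)
    (hdegIn : ∀ v, (inN A v).ncard ≤ 3)
    (hnp : ∀ a b, ¬ σ.SameCycle a b → ¬ (A a (σ b) ∧ A b (σ a)))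
    {x y z : V} (hxy : A x y) (hcross : ¬ σ.SameCycle x y)
    (hz1 : A z y) (hz2 : A z (σ x)) (hz3 : z ≠ σ⁻¹ y) (hz4 : z ≠ x)
    (hinNy : inN A y = {σ⁻¹ y, x, z}) : σ.SameCycle z y := by
  by_contra hzy
  obtain ⟨z₂, hz₂1, hz₂2, hz₂3, hz₂4, hz₂5⟩ := keyIn A σ hfac hqIn hdegIn hnp hz1 hzy
  have hz₂mem : z₂ ∈ inN A y := by rw [hz₂5]; right; right; rfl
  rw [hinNy] at hz₂mem
  simp only [Set.mem_insert_iff, Set.mem_singleton_iff] at hz₂mem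
  have hz₂x : z₂ = x := by
    rcases hz₂mem with h | h | h
    · exact absurd h hz₂3
    · exact h
    · exact absurd h hz₂4
  rw [hz₂x] at hz₂2
  obtain ⟨w, hw1, hw2, hw3, hw4, hw5⟩ := keyOut A σ hfac hqOut hdegOut hnp hxy hcross
  have hmem : σ z ∈ outN A x := hz₂2
  rw [hw5] at hmem
  simp only [Set.mem_insert_iff, Set.mem_singleton_iff] at hmem
  rcases hmem with h | h | h
  · exact hz4 (σ.injective h)
  · exact hz3 (by rw [← h]; simp)
  · apply hnp (σ⁻¹ y) z
      (fun hc => hzy (hc.symm.trans (⟨1, by simp⟩ : σ.SameCycle (σ⁻¹ y) y)))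
    constructor
    · rw [h]; exact hw2
    · rw [Equiv.Perm.coe_inv, Equiv.apply_symm_apply]; exact hz1

lemma wSC (A : V → V → Prop) (σ : Equiv.Perm V)
    (hfac : IsCycleFactor A σ)
    (hqOut : ∀ S, IsQSet (outN A) S → S.ncard ≤ (commonUnion (outN A) S).ncard)
    (hqIn : ∀ S, IsQSet (inN A) S → S.ncard ≤ (commonUnion (inN A) S).ncard)
    (hdegOut : ∀ v, (outN A v).ncard ≤ 3)
    (hdegIn : ∀ v, (inN A v).ncard ≤ 3)
    (hnp : ∀ a b, ¬ σ.SameCycle a b → ¬ (A a (σ b) ∧ A b (σ a)))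
    {x y w : V} (hxy : A x y) (hcross : ¬ σ.SameCycle x y)
    (hw1 : A x w) (hw2 : A (σ⁻¹ y) w) (hw3 : w ≠ σ x) (hw4 : w ≠ y)
    (houtNx : outN A x = {σ x, y, w}) : σ.SameCycle w x := by
  have hfac' : IsCycleFactor (fun p q => A q p) σ⁻¹ := by
    intro v
    constructor
    · show A (σ⁻¹ v) v
      have := (hfac (σ⁻¹ v)).1
      rwa [Equiv.Perm.coe_inv, Equiv.apply_symm_apply] at this
    · intro h
      have h2 := congrArg σ h
      rw [Equiv.Perm.coe_inv, Equiv.apply_symm_apply] at h2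
      exact (hfac v).2 h2.symm
  have hnp' : ∀ a b, ¬ (σ⁻¹).SameCycle a b →
      ¬ ((fun p q => A q p) a (σ⁻¹ b) ∧ (fun p q => A q p) b (σ⁻¹ a)) := by
    intro a b hsc hand
    have hinva : σ.SameCycle a (σ⁻¹ a) := ⟨-1, by simp⟩
    have hinvb : σ.SameCycle (σ⁻¹ b) b := ⟨1, by simp⟩
    have hsc2 : ¬ σ.SameCycle (σ⁻¹ a) (σ⁻¹ b) := by
      intro hc
      exact hsc ((Equiv.Perm.sameCycle_inv).mpr (hinva.trans (hc.trans hinvb)))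
    apply hnp (σ⁻¹ a) (σ⁻¹ b) hsc2
    constructor
    · rw [Equiv.Perm.coe_inv, Equiv.apply_symm_apply]; exact hand.2
    · rw [Equiv.Perm.coe_inv, Equiv.apply_symm_apply]; exact hand.1
  have hcross' : ¬ (σ⁻¹).SameCycle y x := by
    intro h
    exact hcross (((Equiv.Perm.sameCycle_inv).mp h).symm)
  have h := zSC (fun p q => A q p) σ⁻¹ hfac' hqIn hqOut hdegIn hdegOut hnp'
    (x := y) (y := x) (z := w)
    (show (fun p q => A q p) y x from hxy) hcross'
    (show (fun p q => A q p) w x from hw1)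
    (show (fun p q => A q p) w (σ⁻¹ y) from hw2)
    (by rw [inv_inv]; exact hw3) hw4
    (by show outN A x = _; rw [inv_inv]; exact houtNx)
  exact (Equiv.Perm.sameCycle_inv).mp h

lemma uniqueCrossOut (A : V → V → Prop) (σ : Equiv.Perm V)
    (hfac : IsCycleFactor A σ)
    (hqOut : ∀ S, IsQSet (outN A) S → S.ncard ≤ (commonUnion (outN A) S).ncard)
    (hqIn : ∀ S, IsQSet (inN A) S → S.ncard ≤ (commonUnion (inN A) S).ncard)
    (hdegOut : ∀ v, (outN A v).ncard ≤ 3)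
    (hdegIn : ∀ v, (inN A v).ncard ≤ 3)
    (hnp : ∀ a b, ¬ σ.SameCycle a b → ¬ (A a (σ b) ∧ A b (σ a)))
    {x y : V} (hxy : A x y) (hcross : ¬ σ.SameCycle x y) :
    ∀ y', A x y' → ¬ σ.SameCycle x y' → y' = y := by
  obtain ⟨w, hw1, hw2, hw3, hw4, hw5⟩ := keyOut A σ hfac hqOut hdegOut hnp hxy hcross
  have hwsc := wSC A σ hfac hqOut hqIn hdegOut hdegIn hnp hxy hcross hw1 hw2 hw3 hw4 hw5
  intro y' h1 h2
  have hmem : y' ∈ outN A x := h1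
  rw [hw5] at hmem
  simp only [Set.mem_insert_iff, Set.mem_singleton_iff] at hmem
  rcases hmem with h | h | h
  · exact absurd (h ▸ (⟨1, by simp⟩ : σ.SameCycle x (σ x))) h2
  · exact h
  · exact absurd (h ▸ hwsc.symm) h2

lemma uniqueCrossIn (A : V → V → Prop) (σ : Equiv.Perm V)
    (hfac : IsCycleFactor A σ)
    (hqOut : ∀ S, IsQSet (outN A) S → S.ncard ≤ (commonUnion (outN A) S).ncard)
    (hqIn : ∀ S, IsQSet (inN A) S → S.ncard ≤ (commonUnion (inN A) S).ncard)
    (hdegOut : ∀ v, (outN A v).ncard ≤ 3)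
    (hdegIn : ∀ v, (inN A v).ncard ≤ 3)
    (hnp : ∀ a b, ¬ σ.SameCycle a b → ¬ (A a (σ b) ∧ A b (σ a)))
    {x y : V} (hxy : A x y) (hcross : ¬ σ.SameCycle x y) :
    ∀ x', A x' y → ¬ σ.SameCycle x' y → x' = x := by
  obtain ⟨z, hz1, hz2, hz3, hz4, hz5⟩ := keyIn A σ hfac hqIn hdegIn hnp hxy hcross
  have hzsc := zSC A σ hfac hqOut hqIn hdegOut hdegIn hnp hxy hcross hz1 hz2 hz3 hz4 hz5
  intro x' h1 h2
  have hmem : x' ∈ inN A y := h1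
  rw [hz5] at hmem
  simp only [Set.mem_insert_iff, Set.mem_singleton_iff] at hmem
  rcases hmem with h | h | h
  · exact absurd (h ▸ (⟨1, by simp⟩ : σ.SameCycle (σ⁻¹ y) y)) h2
  · exact h
  · exact absurd (h ▸ hzsc) h2

def bigOut {V : Type*} (A : V → V → Prop) (S : Set V) : Set V := {w | ∃ v ∈ S, A v w}

variable {V : Type*} [Fintype V] [DecidableEq V]

lemma hallCond (A : V → V → Prop)
    (hq : ∀ S, IsQSet (outN A) S → S.ncard ≤ (commonUnion (outN A) S).ncard)
    (hne : ∀ v, (outN A v).Nonempty) :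
    ∀ (n : ℕ) (S : Set V), S.ncard = n → S.ncard ≤ (bigOut A S).ncard := by
  intro n
  induction n using Nat.strong_induction_on with
  | _ n ih =>
    intro S hS
    rcases Nat.eq_zero_or_pos n with rfl | hpos
    · rw [hS]; exact Nat.zero_le _
    by_cases hsplit : ∃ u ∈ S, ∀ v ∈ S, v ≠ u → outN A u ∩ outN A v = ∅
    · obtain ⟨u, huS, hu⟩ := hsplit
      set S' := S \ {u} with hS'def
      have hS' : S'.ncard = n - 1 := by
        rw [hS'def, Set.ncard_diff_singleton_of_mem huS, hS]
      have hih : S'.ncard ≤ (bigOut A S').ncard := ih (n - 1) (by omega) S' hS'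
      have hunion : bigOut A S = outN A u ∪ bigOut A S' := by
        ext w
        constructor
        · rintro ⟨v, hvS, hvw⟩
          by_cases hvu : v = u
          · exact Or.inl (hvu ▸ hvw)
          · exact Or.inr ⟨v, ⟨hvS, hvu⟩, hvw⟩
        · rintro (h | ⟨v, hv, hvw⟩)
          · exact ⟨u, huS, h⟩
          · exact ⟨v, hv.1, hvw⟩
      have hdisj : Disjoint (outN A u) (bigOut A S') := by
        rw [Set.disjoint_left]
        rintro w hw ⟨v, hv, hvw⟩
        have hempty := hu v hv.1 hv.2
        have : w ∈ outN A u ∩ outN A v := ⟨hw, hvw⟩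
        rw [hempty] at this
        exact this
      have h1 : 1 ≤ (outN A u).ncard := (Set.ncard_pos (Set.toFinite _)).mpr (hne u)
      rw [hunion, Set.ncard_union_eq hdisj (Set.toFinite _) (Set.toFinite _), hS]
      omega
    · push_neg at hsplit
      rcases Nat.lt_or_ge n 2 with h2 | h2
      · -- n = 1
        have hn1 : S.ncard = 1 := by omega
        obtain ⟨u, hu⟩ := Set.ncard_eq_one.mp hn1
        obtain ⟨v, hvS, hvne, _⟩ := hsplit u (by rw [hu]; exact rfl)
        rw [hu] at hvS
        exact absurd hvS hvne
      · have hqs : IsQSet (outN A) S := by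
          constructor
          · omega
          · intro u hu
            obtain ⟨v, hvS, hvne, hN⟩ := hsplit u hu
            exact ⟨v, hvS, hvne, hN⟩
        refine le_trans (hq S hqs) (Set.ncard_le_ncard ?_ (Set.toFinite _))
        rintro w ⟨u, huS, v, hvS, huv, hwu, hwv⟩
        exact ⟨u, huS, hwu⟩

lemma exists_factor (A : V → V → Prop) (hloop : ∀ v, ¬ A v v)
    (hq : ∀ S, IsQSet (outN A) S → S.ncard ≤ (commonUnion (outN A) S).ncard)
    (hne : ∀ v, (outN A v).Nonempty) :
    ∃ σ : Equiv.Perm V, IsCycleFactor A σ := by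
  classical
  have hcond : ∀ s : Finset V,
      s.card ≤ (s.biUnion (fun v => (Set.toFinite (outN A v)).toFinset)).card := by
    intro s
    have h1 : (↑s : Set V).ncard ≤ (bigOut A ↑s).ncard := hallCond A hq hne _ _ rfl
    have h3 : bigOut A ↑s = ↑(s.biUnion fun v => (Set.toFinite (outN A v)).toFinset) := by
      ext w
      simp only [bigOut, Set.mem_setOf_eq, Finset.coe_biUnion, Set.mem_iUnion,
        Finset.mem_coe, Set.Finite.mem_toFinset, outN, Set.mem_setOf_eq]
      tauto
    calc s.card = (↑s : Set V).ncard := (Set.ncard_coe_finset s).symm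
      _ ≤ (bigOut A ↑s).ncard := h1
      _ = (↑(s.biUnion fun v => (Set.toFinite (outN A v)).toFinset) : Set V).ncard := by rw [h3]
      _ = _ := Set.ncard_coe_finset _
  obtain ⟨f, hfinj, hf⟩ := (Finset.all_card_le_biUnion_card_iff_exists_injective _).mp hcond
  have hbij := Finite.injective_iff_bijective.mp hfinj
  refine ⟨Equiv.ofBijective f hbij, fun v => ?_⟩
  have hfv : A v (f v) := by
    have := hf v
    rwa [Set.Finite.mem_toFinset] at this
  constructor
  · exact hfv
  · intro h
    have h' : f v = v := h
    rw [h'] at hfv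
    exact hloop v hfv

end Aux

/-- A strong s-quadrangular digraph with all out- and in-degrees at most 3 is
hamiltonian: it has a Hamilton cycle, i.e. a single directed cycle through all
vertices (encoded as a cyclic permutation `σ` with full support following the arcs). -/
theorem strong_squad_maxdeg_three_hamiltonian {V : Type*} [Fintype V] [DecidableEq V]
    (A : V → V → Prop) (hloopless : ∀ v, ¬ A v v) (hcard : 2 ≤ Fintype.card V)
    (hstrong : StrongD A) (hsq : SQuadD A)
    (hdeg : ∀ v, (outN A v).ncard ≤ 3 ∧ (inN A v).ncard ≤ 3) :
    ∃ σ : Equiv.Perm V, (∀ v, A v (σ v)) ∧ σ.IsCycle ∧ σ.support = Finset.univ := by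
  classical
  have hqOut := hsq.1
  have hqIn := hsq.2
  have hdegOut : ∀ v, (outN A v).ncard ≤ 3 := fun v => (hdeg v).1
  have hdegIn : ∀ v, (inN A v).ncard ≤ 3 := fun v => (hdeg v).2
  have mkfac : ∀ τ : Equiv.Perm V, (∀ v, A v (τ v)) → IsCycleFactor A τ :=
    fun τ h v => ⟨h v, fun he => hloopless v (by have hv := h v; rwa [he] at hv)⟩
  have hne : ∀ v, (outN A v).Nonempty := by
    intro v
    obtain ⟨w, hw⟩ := Fintype.exists_ne_of_one_lt_card (by omega) v
    rcases (hstrong v w).cases_head with he | ⟨c, hc, _⟩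
    · exact absurd he.symm hw
    · exact ⟨c, hc⟩
  obtain ⟨σ₀, hσ₀⟩ := exists_factor A hloopless hqOut hne
  obtain ⟨σ, hfacσ, hmin⟩ :
      ∃ σ, IsCycleFactor A σ ∧ ∀ τ, IsCycleFactor A τ → nCyc σ ≤ nCyc τ := by
    have hset : {m : ℕ | ∃ τ : Equiv.Perm V, IsCycleFactor A τ ∧ nCyc τ = m}.Nonempty :=
      ⟨nCyc σ₀, σ₀, hσ₀, rfl⟩
    obtain ⟨τ, hτ, hτm⟩ := Nat.sInf_mem hset
    exact ⟨τ, hτ, fun τ' hτ' => by rw [hτm]; exact Nat.sInf_le ⟨τ', hτ', rfl⟩⟩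
  have hnp : ∀ a b, ¬ σ.SameCycle a b → ¬ (A a (σ b) ∧ A b (σ a)) := by
    rintro p q hsc ⟨h1, h2⟩
    have hpq : p ≠ q := fun he => hsc (he ▸ SameCycle.refl σ p)
    have hfac' : IsCycleFactor A (σ * Equiv.swap p q) := by
      apply mkfac
      intro v
      rw [Equiv.Perm.mul_apply]
      rcases eq_or_ne v p with rfl | hvp
      · rw [Equiv.swap_apply_left]; exact h1
      · rcases eq_or_ne v q with rfl | hvq
        · rw [Equiv.swap_apply_right]; exact h2
        · rw [Equiv.swap_apply_of_ne_of_ne hvp hvq]; exact (hfacσ v).1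
    exact absurd (hmin _ hfac') (not_le.mpr (merge2 σ p q hsc))
  have hall : ∀ p q, σ.SameCycle p q := by
    by_contra hncc
    push_neg at hncc
    obtain ⟨p₀, q₀, hpq0⟩ := hncc
    have hcrossarc : ∃ x y, A x y ∧ ¬ σ.SameCycle x y := by
      by_contra hno
      push_neg at hno
      apply hpq0
      have key : ∀ a b, Relation.ReflTransGen A a b → σ.SameCycle a b := by
        intro a b h
        induction h with
        | refl => exact SameCycle.refl σ _
        | tail _ hbc ih => exact ih.trans (hno _ _ hbc)
      exact key p₀ q₀ (hstrong p₀ q₀)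
    obtain ⟨x₀, y₀, hxy₀, hcross₀⟩ := hcrossarc
    -- the type of crossing arcs
    let Cr := {e : V × V // A e.1 e.2 ∧ ¬ σ.SameCycle e.1 e.2}
    let e₀ : Cr := ⟨(x₀, y₀), hxy₀, hcross₀⟩
    have hkey : ∀ e : Cr, ∃ w, A e.1.1 w ∧ A (σ⁻¹ e.1.2) w ∧ w ≠ σ e.1.1 ∧ w ≠ e.1.2 ∧
        outN A e.1.1 = {σ e.1.1, e.1.2, w} :=
      fun e => keyOut A σ hfacσ hqOut hdegOut hnp e.2.1 e.2.2
    choose wf hwf1 hwf2 hwf3 hwf4 hwf5 using hkey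
    have hwfsc : ∀ e : Cr, σ.SameCycle (wf e) e.1.1 := fun e =>
      wSC A σ hfacσ hqOut hqIn hdegOut hdegIn hnp e.2.1 e.2.2
        (hwf1 e) (hwf2 e) (hwf3 e) (hwf4 e) (hwf5 e)
    have hnxtcross : ∀ e : Cr, ¬ σ.SameCycle (σ⁻¹ e.1.2) (wf e) := by
      intro e hc
      have h1 : σ.SameCycle e.1.2 (σ⁻¹ e.1.2) := ⟨-1, by simp⟩
      exact e.2.2 ((h1.trans (hc.trans (hwfsc e))).symm)
    let nxt : Cr → Cr := fun e => ⟨(σ⁻¹ e.1.2, wf e), hwf2 e, hnxtcross e⟩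
    have hnxtinj : Function.Injective nxt := by
      intro e e' hee
      have hy : e.1.2 = e'.1.2 := by
        have h1 : σ⁻¹ e.1.2 = σ⁻¹ e'.1.2 := congrArg (fun z : Cr => z.1.1) hee
        exact (Equiv.injective σ⁻¹) h1
      have hx : e.1.1 = e'.1.1 := by
        apply uniqueCrossIn A σ hfacσ hqOut hqIn hdegOut hdegIn hnp e'.2.1 e'.2.2
        · rw [← hy]; exact e.2.1
        · rw [← hy]; exact e.2.2
      exact Subtype.ext (Prod.ext hx hy)
    let es : ℕ → Cr := fun m => nxt^[m] e₀
    have hsuc : ∀ m, es (m+1) = nxt (es m) := fun m => Function.iterate_succ_apply' nxt m e₀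
    have ha : ∀ m, (es (m+1)).1.1 = σ⁻¹ ((es m).1.2) := fun m => by rw [hsuc m]
    have hb : ∀ m, (es (m+1)).1.2 = wf (es m) := fun m => by rw [hsuc m]
    have hbσa : ∀ m, (es m).1.2 = σ ((es (m+1)).1.1) := fun m => by
      rw [ha m, Equiv.Perm.coe_inv, Equiv.apply_symm_apply]
    have harc : ∀ m, A (es m).1.1 (es m).1.2 := fun m => (es m).2.1
    have hcr : ∀ m, ¬ σ.SameCycle (es m).1.1 (es m).1.2 := fun m => (es m).2.2
    have houtn : ∀ m, outN A (es m).1.1 =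
        {σ ((es m).1.1), σ ((es (m+1)).1.1), σ ((es (m+2)).1.1)} := by
      intro m
      have h := hwf5 (es m)
      rw [hbσa m, ← hb m, hbσa (m+1)] at h
      exact h
    have hsc_a_b : ∀ m, σ.SameCycle ((es (m+1)).1.1) ((es m).1.2) := fun m => by
      rw [ha m]; exact ⟨1, by simp⟩
    have hsc2 : ∀ m, σ.SameCycle ((es (m+2)).1.1) ((es m).1.1) := by
      intro m
      have h1 := hsc_a_b (m+1)
      rw [hb m] at h1
      exact h1.trans (hwfsc (es m))
    have hne01 : ∀ m, ¬ σ.SameCycle ((es m).1.1) ((es (m+1)).1.1) := by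
      intro m hc
      exact hcr m (hc.trans (hsc_a_b m))
    have heven : ∀ k m, σ.SameCycle ((es m).1.1) ((es (m + 2*k)).1.1) := by
      intro k
      induction k with
      | zero => intro m; simpa using SameCycle.refl σ ((es m).1.1)
      | succ k ih =>
        intro m
        have h2 := hsc2 (m + 2*k)
        have he : m + 2*(k+1) = (m + 2*k) + 2 := by ring
        rw [he]
        exact (ih m).trans h2.symm
    have hodd : ∀ k m, ¬ σ.SameCycle ((es m).1.1) ((es (m + (2*k+1))).1.1) := by
      intro k m hc
      have h1 := heven k (m+1)
      have he : m + (2*k+1) = (m+1) + 2*k := by ring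
      rw [he] at hc
      exact hne01 m (hc.trans h1.symm)
    have hper : ∃ m, 0 < m ∧ es m = e₀ := by
      have hgen : ∀ i j : ℕ, i < j → es i = es j → ∃ m, 0 < m ∧ es m = e₀ := by
        intro i j hlt heq
        refine ⟨j - i, by omega, ?_⟩
        have h1 : nxt^[i] (nxt^[j-i] e₀) = nxt^[i] e₀ := by
          calc nxt^[i] (nxt^[j-i] e₀) = nxt^[i + (j-i)] e₀ :=
              (Function.iterate_add_apply nxt i (j-i) e₀).symm
            _ = es j := by rw [show i + (j - i) = j from by omega]
            _ = es i := heq.symm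
        exact Function.Injective.iterate hnxtinj i h1
      obtain ⟨i, j, hij, hmap⟩ := Finite.exists_ne_map_eq_of_infinite es
      rcases lt_or_gt_of_ne hij with hlt | hgt
      · exact hgen i j hlt hmap
      · exact hgen j i hgt hmap.symm
    obtain ⟨n, hn0, hnper, hnmin⟩ :
        ∃ n, 0 < n ∧ es n = e₀ ∧ ∀ m, 0 < m → es m = e₀ → n ≤ m :=
      ⟨Nat.find hper, (Nat.find_spec hper).1, (Nat.find_spec hper).2,
        fun m h1 h2 => Nat.find_le ⟨h1, h2⟩⟩
    have h_ne2 : ∀ m, (es (m+2)).1.1 ≠ (es m).1.1 := by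
      intro m he
      apply hwf3 (es m)
      rw [← hb m, hbσa (m+1), he]
    have huniq_tail : ∀ m m', (es m).1.1 = (es m').1.1 → es m = es m' := by
      intro m m' h
      refine Subtype.ext (Prod.ext h ?_)
      apply uniqueCrossOut A σ hfacσ hqOut hqIn hdegOut hdegIn hnp (harc m') (hcr m')
      · rw [← h]; exact harc m
      · rw [← h]; exact hcr m
    have hnodd : ¬ Odd n := by
      rintro ⟨k, hk⟩
      apply hodd k 0
      have h1 : (0 : ℕ) + (2*k+1) = n := by omega
      rw [h1, hnper]
      exact SameCycle.refl σ _
    have hne_n2 : n ≠ 2 := by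
      intro h2
      apply h_ne2 0
      show (es (0+2)).1.1 = (es 0).1.1
      have : es (0+2) = e₀ := by rw [show (0+2 : ℕ) = 2 from rfl, ← h2]; exact hnper
      rw [this]
      rfl
    have hne_n4 : n ≠ 4 := by
      intro h4
      have hes4 : es 4 = e₀ := by rw [← h4]; exact hnper
      have d01 : (es 0).1.1 ≠ (es 1).1.1 := by
        intro he; exact hne01 0 (by rw [he])
      have d12 : (es 1).1.1 ≠ (es 2).1.1 := by
        intro he; exact hne01 1 (by rw [he])
      have d23 : (es 2).1.1 ≠ (es 3).1.1 := by
        intro he; exact hne01 2 (by rw [he])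
      have d30 : (es 3).1.1 ≠ (es 0).1.1 := by
        intro he
        apply hne01 3
        show σ.SameCycle ((es 3).1.1) ((es (3+1)).1.1)
        have h40 : es (3+1) = es 0 := by
          show es 4 = es 0
          rw [hes4]; rfl
        rw [h40, he]
      have d02 : (es 0).1.1 ≠ (es 2).1.1 := fun he => h_ne2 0 he.symm
      have d13 : (es 1).1.1 ≠ (es 3).1.1 := fun he => h_ne2 1 he.symm
      have s02 : σ.SameCycle ((es 0).1.1) ((es 2).1.1) := (hsc2 0).symm
      have s13 : σ.SameCycle ((es 1).1.1) ((es 3).1.1) := (hsc2 1).symm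
      have arc0 : A ((es 0).1.1) (σ ((es 1).1.1)) := by rw [← hbσa 0]; exact harc 0
      have arc1 : A ((es 1).1.1) (σ ((es 2).1.1)) := by rw [← hbσa 1]; exact harc 1
      have arc2 : A ((es 2).1.1) (σ ((es 3).1.1)) := by rw [← hbσa 2]; exact harc 2
      have arc3 : A ((es 3).1.1) (σ ((es 0).1.1)) := by
        have h := harc 3
        rw [hbσa 3] at h
        have h40 : es (3+1) = es 0 := by show es 4 = es 0; rw [hes4]; rfl
        rwa [h40] at h
      set A0 := (es 0).1.1
      set A1 := (es 1).1.1
      set A2 := (es 2).1.1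
      set A3 := (es 3).1.1
      set τ : Equiv.Perm V := Equiv.swap A0 A1 * Equiv.swap A1 A2 * Equiv.swap A2 A3 with hτdef
      have hτ₀ : τ A0 = A1 := by
        rw [hτdef]
        simp only [Equiv.Perm.mul_apply]
        rw [Equiv.swap_apply_of_ne_of_ne d02 (Ne.symm d30),
          Equiv.swap_apply_of_ne_of_ne d01 d02, Equiv.swap_apply_left]
      have hτ₁ : τ A1 = A2 := by
        rw [hτdef]
        simp only [Equiv.Perm.mul_apply]
        rw [Equiv.swap_apply_of_ne_of_ne d12 d13, Equiv.swap_apply_left,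
          Equiv.swap_apply_of_ne_of_ne (Ne.symm d02) (Ne.symm d12)]
      have hτ₂ : τ A2 = A3 := by
        rw [hτdef]
        simp only [Equiv.Perm.mul_apply]
        rw [Equiv.swap_apply_left, Equiv.swap_apply_of_ne_of_ne (Ne.symm d13) (Ne.symm d23),
          Equiv.swap_apply_of_ne_of_ne d30 (Ne.symm d13)]
      have hτ₃ : τ A3 = A0 := by
        rw [hτdef]
        simp only [Equiv.Perm.mul_apply]
        rw [Equiv.swap_apply_right, Equiv.swap_apply_right, Equiv.swap_apply_right]
      have hτoth : ∀ v, v ∉ ({A0, A1, A2, A3} : Set V) → τ v = v := by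
        intro v hv
        simp only [Set.mem_insert_iff, Set.mem_singleton_iff, not_or] at hv
        obtain ⟨h0, h1, h2, h3⟩ := hv
        rw [hτdef]
        simp only [Equiv.Perm.mul_apply]
        rw [Equiv.swap_apply_of_ne_of_ne h2 h3, Equiv.swap_apply_of_ne_of_ne h1 h2,
          Equiv.swap_apply_of_ne_of_ne h0 h1]
      have hfacτ : IsCycleFactor A (σ * τ) := by
        apply mkfac
        intro v
        rw [Equiv.Perm.mul_apply]
        by_cases h0 : v = A0
        · rw [h0, hτ₀]; exact arc0
        by_cases h1 : v = A1
        · rw [h1, hτ₁]; exact arc1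
        by_cases h2 : v = A2
        · rw [h2, hτ₂]; exact arc2
        by_cases h3 : v = A3
        · rw [h3, hτ₃]; exact arc3
        rw [hτoth v (by simp [h0, h1, h2, h3])]
        exact (hfacσ v).1
      exact absurd (hmin _ hfacτ)
        (not_le.mpr (merge4 σ A0 A1 A2 A3 τ hτ₀ hτ₁ hτ₂ hτ₃ hτoth s02 s13 (hne01 0) d02 d13))
    have hn1 : n ≠ 1 := fun h => hnodd (h ▸ odd_one)
    have hn3 : n ≠ 3 := fun h => hnodd (h ▸ (⟨1, by norm_num⟩ : Odd 3))
    have hn5 : 5 ≤ n := by omega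
    -- final contradiction via a q-set of size two with a single common out-neighbour
    have d02 : (es 0).1.1 ≠ (es 2).1.1 := fun he => h_ne2 0 he.symm
    have hsc04 : σ.SameCycle ((es 0).1.1) ((es 4).1.1) := by
      have h := heven 2 0
      norm_num at h
      exact h
    have d03 : ¬ σ.SameCycle ((es 0).1.1) ((es 3).1.1) := by
      have h := hodd 1 0
      norm_num at h
      exact h
    have d03' : (es 0).1.1 ≠ (es 3).1.1 := fun he => d03 (by rw [he])
    have d14 : (es 1).1.1 ≠ (es 4).1.1 := by
      intro he
      apply hne01 0
      show σ.SameCycle ((es 0).1.1) ((es 1).1.1)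
      rw [he]
      exact hsc04
    have d04 : (es 0).1.1 ≠ (es 4).1.1 := by
      intro he
      have h4 : es 4 = es 0 := huniq_tail 4 0 he.symm
      have := hnmin 4 (by norm_num) (by rw [h4]; rfl)
      omega
    have d13 : (es 1).1.1 ≠ (es 3).1.1 := by
      intro he
      have h31 : es 3 = es 1 := huniq_tail 3 1 he.symm
      have h20 : es 2 = es 0 := by
        apply hnxtinj
        rw [← hsuc 2, ← hsuc 0]
        exact h31
      have := hnmin 2 (by norm_num) (by rw [h20]; rfl)
      omega
    have d24 : (es 2).1.1 ≠ (es 4).1.1 := by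
      intro he
      have h42 : es 4 = es 2 := huniq_tail 4 2 he.symm
      have h31 : es 3 = es 1 := by
        apply hnxtinj
        rw [← hsuc 3, ← hsuc 1]
        exact h42
      have h20 : es 2 = es 0 := by
        apply hnxtinj
        rw [← hsuc 2, ← hsuc 0]
        exact h31
      have := hnmin 2 (by norm_num) (by rw [h20]; rfl)
      omega
    have d12 : (es 1).1.1 ≠ (es 2).1.1 := by
      intro he; exact hne01 1 (by rw [he])
    have d23 : (es 2).1.1 ≠ (es 3).1.1 := by
      intro he; exact hne01 2 (by rw [he])
    have h0 := houtn 0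
    have h2 := houtn 2
    norm_num at h0 h2
    have hint : outN A ((es 0).1.1) ∩ outN A ((es 2).1.1) = {σ ((es 2).1.1)} := by
      rw [h0, h2]
      ext v
      simp only [Set.mem_inter_iff, Set.mem_insert_iff, Set.mem_singleton_iff]
      constructor
      · rintro ⟨h | h | h, h' | h' | h'⟩
        · exact absurd (σ.injective (h.symm.trans h')) d02
        · exact absurd (σ.injective (h.symm.trans h')) d03'
        · exact absurd (σ.injective (h.symm.trans h')) d04
        · exact absurd (σ.injective (h.symm.trans h')) d12
        · exact absurd (σ.injective (h.symm.trans h')) d13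
        · exact absurd (σ.injective (h.symm.trans h')) d14
        · exact h
        · exact absurd (σ.injective (h.symm.trans h')) d23
        · exact absurd (σ.injective (h.symm.trans h')) d24
      · rintro rfl
        exact ⟨Or.inr (Or.inr rfl), Or.inl rfl⟩
    have hqs : IsQSet (outN A) {(es 0).1.1, (es 2).1.1} := by
      constructor
      · rw [Set.ncard_pair d02]
      · intro u hu
        have hmem0 : σ ((es 2).1.1) ∈ outN A ((es 0).1.1) ∩ outN A ((es 2).1.1) := by
          rw [hint]; rfl
        simp only [Set.mem_insert_iff, Set.mem_singleton_iff] at hu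
        rcases hu with rfl | rfl
        · exact ⟨(es 2).1.1, Or.inr rfl, Ne.symm d02, ⟨σ ((es 2).1.1), hmem0⟩⟩
        · exact ⟨(es 0).1.1, Or.inl rfl, d02, ⟨σ ((es 2).1.1), hmem0.2, hmem0.1⟩⟩
    have hcontra := hqOut _ hqs
    rw [commonUnion_pair _ _ _ d02, hint, Set.ncard_pair d02, Set.ncard_singleton] at hcontra
    omega
  obtain ⟨v₀⟩ : Nonempty V := Fintype.card_pos_iff.mp (by omega)
  refine ⟨σ, fun v => (hfacσ v).1, ⟨v₀, (hfacσ v₀).2, fun y _ => hall v₀ y⟩, ?_⟩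
  exact Finset.eq_univ_iff_forall.mpr (fun v => Equiv.Perm.mem_support.mpr (hfacσ v).2)
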